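/- Let P be a real symmetric positive definite n×n matrix, H a real p×n matrix of rank p (1 ≤ p ≤ n), and Q a real symmetric positive definite p×p matrix. Then P_mod := P + Hᵀ·(Q − (H·P⁻¹·Hᵀ)⁻¹)·H is symmetric positive definite and satisfies H·P_mod⁻¹·Hᵀ = Q⁻¹. -/

import Mathlib

open Matrix

/-- For `P` symmetric positive definite `n×n`, `H` a `p×n` matrix of rank `p`, and `Q`
symmetric positive definite `p×p`, the matrix
`P_mod := P + Hᵀ·(Q − (H·P⁻¹·Hᵀ)⁻¹)·H` is symmetric positive definite and satisfies
`H·P_mod⁻¹·Hᵀ = Q⁻¹`. -/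
theorem stmt_3 {n p : ℕ} (hp1 : 1 ≤ p) (hpn : p ≤ n)
    (P : Matrix (Fin n) (Fin n) ℝ) (hPsym : P.IsSymm) (hP : P.PosDef)
    (H : Matrix (Fin p) (Fin n) ℝ) (hH : H.rank = p)
    (Q : Matrix (Fin p) (Fin p) ℝ) (hQsym : Q.IsSymm) (hQ : Q.PosDef) :
    (P + Hᵀ * (Q - (H * P⁻¹ * Hᵀ)⁻¹) * H).IsSymm ∧
      (P + Hᵀ * (Q - (H * P⁻¹ * Hᵀ)⁻¹) * H).PosDef ∧
      H * (P + Hᵀ * (Q - (H * P⁻¹ * Hᵀ)⁻¹) * H)⁻¹ * Hᵀ = Q⁻¹ := by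
  have hdP : IsUnit P.det := isUnit_iff_ne_zero.mpr hP.det_pos.ne'
  have hPit : (P⁻¹)ᵀ = P⁻¹ := by rw [Matrix.transpose_nonsing_inv, hPsym.eq]
  -- injectivity of vecMul from full rank
  have hHinj : Function.Injective H.vecMul := by
    rw [Matrix.vecMul_injective_iff]
    rw [linearIndependent_iff_card_eq_finrank_span, Fintype.card_fin, Set.finrank,
      ← Matrix.rank_eq_finrank_span_row, hH]
  -- S := H * P⁻¹ * Hᵀ is positive definite
  have hS : (H * P⁻¹ * Hᵀ).PosDef := by
    rw [posDef_iff_dotProduct_mulVec]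
    constructor
    · show (H * P⁻¹ * Hᵀ)ᴴ = _
      rw [conjTranspose_eq_transpose_of_trivial, transpose_mul, transpose_mul,
        transpose_transpose, hPit, Matrix.mul_assoc]
    · intro x hx
      have hne : Hᵀ *ᵥ x ≠ 0 := by
        rw [mulVec_transpose]
        intro h
        exact hx (hHinj (h.trans (Matrix.zero_vecMul H).symm))
      have := hP.inv.dotProduct_mulVec_pos hne
      simpa [star_trivial, ← Matrix.mulVec_mulVec, dotProduct_mulVec, ← mulVec_transpose,
        Matrix.mul_assoc] using this
  have hdS : IsUnit (H * P⁻¹ * Hᵀ).det := isUnit_iff_ne_zero.mpr hS.det_pos.ne'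
  have hdQ : IsUnit Q.det := isUnit_iff_ne_zero.mpr hQ.det_pos.ne'
  have hPPi : P * P⁻¹ = 1 := Matrix.mul_nonsing_inv P hdP
  have hSSi : (H * P⁻¹ * Hᵀ) * (H * P⁻¹ * Hᵀ)⁻¹ = 1 := Matrix.mul_nonsing_inv _ hdS
  have hSiS : (H * P⁻¹ * Hᵀ)⁻¹ * (H * P⁻¹ * Hᵀ) = 1 := Matrix.nonsing_inv_mul _ hdS
  have hSit : ((H * P⁻¹ * Hᵀ)⁻¹)ᵀ = (H * P⁻¹ * Hᵀ)⁻¹ := by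
    rw [Matrix.transpose_nonsing_inv, transpose_mul, transpose_mul, transpose_transpose,
      hPit, Matrix.mul_assoc]
  have hSit2 : (H * (P⁻¹ * Hᵀ))⁻¹ᵀ = (H * (P⁻¹ * Hᵀ))⁻¹ := by
    rw [← Matrix.mul_assoc]; exact hSit
  -- symmetry of P_mod
  have hsym : (P + Hᵀ * (Q - (H * P⁻¹ * Hᵀ)⁻¹) * H).IsSymm := by
    show _ᵀ = _
    simp only [transpose_add, transpose_mul, transpose_sub, transpose_transpose,
      hPsym.eq, hQsym.eq, hSit, hSit2, Matrix.mul_assoc]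
  -- the "residual" matrix M is positive semidefinite
  have hcancel : Hᵀ * (H * P⁻¹ * Hᵀ)⁻¹ * H * P⁻¹ * Hᵀ = Hᵀ := by
    rw [Matrix.mul_assoc (Hᵀ * (H * P⁻¹ * Hᵀ)⁻¹ * H), Matrix.mul_assoc (Hᵀ * (H * P⁻¹ * Hᵀ)⁻¹),
      ← Matrix.mul_assoc H P⁻¹ Hᵀ, Matrix.mul_assoc Hᵀ, hSiS, Matrix.mul_one]
  have hMt : (P - Hᵀ * (H * P⁻¹ * Hᵀ)⁻¹ * H)ᵀ = P - Hᵀ * (H * P⁻¹ * Hᵀ)⁻¹ * H := by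
    simp only [transpose_sub, transpose_mul, transpose_transpose, hPsym.eq, hSit, hSit2,
      Matrix.mul_assoc]
  have hMP : (P - Hᵀ * (H * P⁻¹ * Hᵀ)⁻¹ * H) * P⁻¹ * (P - Hᵀ * (H * P⁻¹ * Hᵀ)⁻¹ * H)
      = P - Hᵀ * (H * P⁻¹ * Hᵀ)⁻¹ * H := by
    simp only [Matrix.sub_mul, Matrix.mul_sub, ← Matrix.mul_assoc, hPPi, Matrix.one_mul,
      Matrix.nonsing_inv_mul_cancel_right _ _ hdP, hcancel]
    abel
  have hMpsd : (P - Hᵀ * (H * P⁻¹ * Hᵀ)⁻¹ * H).PosSemidef := by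
    have h := (hP.inv.posSemidef).conjTranspose_mul_mul_same
      (P - Hᵀ * (H * P⁻¹ * Hᵀ)⁻¹ * H)
    rwa [conjTranspose_eq_transpose_of_trivial, hMt, hMP] at h
  -- positive definiteness of P_mod
  have hdecomp : P + Hᵀ * (Q - (H * P⁻¹ * Hᵀ)⁻¹) * H
      = (P - Hᵀ * (H * P⁻¹ * Hᵀ)⁻¹ * H) + Hᵀ * Q * H := by
    simp only [Matrix.mul_sub, Matrix.sub_mul]
    abel
  have hpd : (P + Hᵀ * (Q - (H * P⁻¹ * Hᵀ)⁻¹) * H).PosDef := by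
    rw [posDef_iff_dotProduct_mulVec]
    constructor
    · show _ᴴ = _
      rw [conjTranspose_eq_transpose_of_trivial]
      exact hsym
    · intro x hx
      by_cases hHx : H *ᵥ x = 0
      · have h0 : (Hᵀ * (Q - (H * P⁻¹ * Hᵀ)⁻¹) * H) *ᵥ x = 0 := by
          rw [← Matrix.mulVec_mulVec, hHx, mulVec_zero]
        have := hP.dotProduct_mulVec_pos hx
        simpa [add_mulVec, dotProduct_add, h0, star_trivial] using this
      · rw [hdecomp]
        have h1 : 0 ≤ x ⬝ᵥ ((P - Hᵀ * (H * P⁻¹ * Hᵀ)⁻¹ * H) *ᵥ x) := by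
          simpa [star_trivial] using hMpsd.dotProduct_mulVec_nonneg x
        have h2 : 0 < x ⬝ᵥ ((Hᵀ * Q * H) *ᵥ x) := by
          have := hQ.dotProduct_mulVec_pos hHx
          simpa [star_trivial, ← Matrix.mulVec_mulVec, dotProduct_mulVec, ← mulVec_transpose,
            Matrix.mul_assoc] using this
        have : x ⬝ᵥ (((P - Hᵀ * (H * P⁻¹ * Hᵀ)⁻¹ * H) + Hᵀ * Q * H) *ᵥ x)
            = x ⬝ᵥ ((P - Hᵀ * (H * P⁻¹ * Hᵀ)⁻¹ * H) *ᵥ x) + x ⬝ᵥ ((Hᵀ * Q * H) *ᵥ x) := by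
          rw [add_mulVec, dotProduct_add]
        rw [star_trivial, this]
        positivity
  -- the explicit inverse
  have hQQi : Q * Q⁻¹ = 1 := Matrix.mul_nonsing_inv Q hdQ
  set X : Matrix (Fin n) (Fin n) ℝ :=
    P⁻¹ - P⁻¹ * Hᵀ * (H * P⁻¹ * Hᵀ)⁻¹ * H * P⁻¹
      + P⁻¹ * Hᵀ * (H * P⁻¹ * Hᵀ)⁻¹ * Q⁻¹ * (H * P⁻¹ * Hᵀ)⁻¹ * H * P⁻¹ with hXdef
  have hHX : H * X = Q⁻¹ * (H * P⁻¹ * Hᵀ)⁻¹ * H * P⁻¹ := by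
    rw [hXdef]
    simp only [Matrix.mul_sub, Matrix.mul_add, ← Matrix.mul_assoc, hSSi, Matrix.one_mul]
    abel
  have hAX : (P + Hᵀ * (Q - (H * P⁻¹ * Hᵀ)⁻¹) * H) * X = 1 := by
    rw [Matrix.add_mul, Matrix.mul_assoc (Hᵀ * (Q - (H * P⁻¹ * Hᵀ)⁻¹)) H X, hHX, hXdef]
    simp only [Matrix.mul_sub, Matrix.mul_add, Matrix.sub_mul, ← Matrix.mul_assoc, hPPi,
      Matrix.one_mul, Matrix.mul_nonsing_inv_cancel_right _ _ hdQ]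
    abel
  have hXinv : (P + Hᵀ * (Q - (H * P⁻¹ * Hᵀ)⁻¹) * H)⁻¹ = X := Matrix.inv_eq_right_inv hAX
  refine ⟨hsym, hpd, ?_⟩
  rw [hXinv, hHX, Matrix.mul_assoc (Q⁻¹ * (H * P⁻¹ * Hᵀ)⁻¹ * H) P⁻¹ Hᵀ,
    Matrix.mul_assoc (Q⁻¹ * (H * P⁻¹ * Hᵀ)⁻¹) H (P⁻¹ * Hᵀ), ← Matrix.mul_assoc H P⁻¹ Hᵀ,
    Matrix.mul_assoc Q⁻¹ (H * P⁻¹ * Hᵀ)⁻¹ (H * P⁻¹ * Hᵀ), hSiS, Matrix.mul_one]
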